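/- arXiv:2504.11304 — 2 statements merged into one kernel-verified Lean document; each statement's English description precedes it below -/
import Mathlib

section
/- Shooting-vector sensitivity of geodesic regression in the zero-curvature (Euclidean) case (flat instance of Theorem D.1): Let H be a real inner product space, p ∈ H a fixed footpoint, τ ≥ 0, n ≥ 1, and let D = {(x_i, y_i)}_{i=1}^n and D' = {(x_i', y_i')}_{i=1}^n be adjacent datasets in ℝ × H, i.e. (x_i', y_i') = (x_i, y_i) for all i < n, with x_n, x_n' ∈ [0,1]. If v ∈ H satisfies ‖y_n − p − x_n·v‖ ≤ τ and ‖y_n' − p − x_n'·v‖ ≤ τ, then ‖ (1/n)·Σ_{i=1}^n x_i·(p + x_i·v − y_i) − (1/n)·Σ_{i=1}^n x_i'·(p + x_i'·v − y_i') ‖ ≤ 2τ/n. -/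
/-- Shooting-vector sensitivity of geodesic regression in the zero-curvature
(Euclidean) case. -/
theorem shooting_vector_sensitivity_flat
    {H : Type*} [NormedAddCommGroup H] [InnerProductSpace ℝ H]
    (p : H) (τ : ℝ) (hτ : 0 ≤ τ) (n : ℕ) (hn : 1 ≤ n)
    (x x' : Fin n → ℝ) (y y' : Fin n → H)
    (hadj : ∀ i : Fin n, (i : ℕ) + 1 < n → x' i = x i ∧ y' i = y i)
    (hxn : x ⟨n - 1, Nat.sub_lt hn one_pos⟩ ∈ Set.Icc (0 : ℝ) 1)
    (hxn' : x' ⟨n - 1, Nat.sub_lt hn one_pos⟩ ∈ Set.Icc (0 : ℝ) 1)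
    (v : H)
    (hlast : ‖y ⟨n - 1, Nat.sub_lt hn one_pos⟩ - p
        - x ⟨n - 1, Nat.sub_lt hn one_pos⟩ • v‖ ≤ τ)
    (hlast' : ‖y' ⟨n - 1, Nat.sub_lt hn one_pos⟩ - p
        - x' ⟨n - 1, Nat.sub_lt hn one_pos⟩ • v‖ ≤ τ) :
    ‖(1 / (n : ℝ)) • ∑ i, x i • (p + x i • v - y i)
      - (1 / (n : ℝ)) • ∑ i, x' i • (p + x' i • v - y' i)‖ ≤ 2 * τ / n := by
  set m : Fin n := ⟨n - 1, Nat.sub_lt hn one_pos⟩ with hm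
  have hnpos : (0 : ℝ) < n := by exact_mod_cast hn
  have hsum : (∑ i, x i • (p + x i • v - y i))
      - ∑ i, x' i • (p + x' i • v - y' i)
      = x m • (p + x m • v - y m) - x' m • (p + x' m • v - y' m) := by
    rw [← Finset.sum_sub_distrib]
    rw [Finset.sum_eq_single m]
    · intro i _ hi
      have hlt : (i : ℕ) + 1 < n := by
        have h1 : (i : ℕ) < n := i.isLt
        have h2 : (i : ℕ) ≠ n - 1 := fun h => hi (Fin.ext h)
        omega
      obtain ⟨hx, hy⟩ := hadj i hlt
      rw [hx, hy, sub_self]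
    · intro h; exact absurd (Finset.mem_univ m) h
  have hbound : ‖x m • (p + x m • v - y m) - x' m • (p + x' m • v - y' m)‖ ≤ 2 * τ := by
    have h1 : ‖x m • (p + x m • v - y m)‖ ≤ τ := by
      rw [norm_smul]
      have : ‖p + x m • v - y m‖ ≤ τ := by
        rw [show p + x m • v - y m = -(y m - p - x m • v) by abel, norm_neg]
        exact hlast
      calc ‖x m‖ * ‖p + x m • v - y m‖ ≤ 1 * τ := by
            apply mul_le_mul _ this (norm_nonneg _) zero_le_one
            rw [Real.norm_eq_abs, abs_le]; constructor <;> linarith [hxn.1, hxn.2]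
        _ = τ := one_mul τ
    have h2 : ‖x' m • (p + x' m • v - y' m)‖ ≤ τ := by
      rw [norm_smul]
      have : ‖p + x' m • v - y' m‖ ≤ τ := by
        rw [show p + x' m • v - y' m = -(y' m - p - x' m • v) by abel, norm_neg]
        exact hlast'
      calc ‖x' m‖ * ‖p + x' m • v - y' m‖ ≤ 1 * τ := by
            apply mul_le_mul _ this (norm_nonneg _) zero_le_one
            rw [Real.norm_eq_abs, abs_le]; constructor <;> linarith [hxn'.1, hxn'.2]
        _ = τ := one_mul τ
    calc ‖x m • (p + x m • v - y m) - x' m • (p + x' m • v - y' m)‖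
        ≤ ‖x m • (p + x m • v - y m)‖ + ‖x' m • (p + x' m • v - y' m)‖ := norm_sub_le _ _
      _ ≤ 2 * τ := by linarith
  rw [← smul_sub, norm_smul, hsum]
  rw [Real.norm_eq_abs, abs_of_pos (by positivity : (0:ℝ) < 1 / n)]
  rw [div_mul_eq_mul_div, one_mul]
  exact div_le_div_of_nonneg_right hbound hnpos.le
end

section
/- Pure differential privacy of the K-Norm Gradient (KNG) mechanism in normed-space form: Let (Z, 𝒜, ν) be a measure space, H a real normed space, σ > 0, Δ ≥ 0, and let G₁, G₂ : Z → H be measurable maps with ‖G₁(z) − G₂(z)‖ ≤ Δ for all z ∈ Z. Assume 0 < ∫_Z exp(−‖G_j(z)‖/σ) dν(z) < ∞ for j = 1, 2. Then for every measurable set A ⊆ Z, (∫_A exp(−‖G₁(z)‖/σ) dν(z)) / (∫_Z exp(−‖G₁(z)‖/σ) dν(z)) ≤ exp(2Δ/σ) · (∫_A exp(−‖G₂(z)‖/σ) dν(z)) / (∫_Z exp(−‖G₂(z)‖/σ) dν(z)). -/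
open MeasureTheory Real

/-- Pure differential privacy of the K-Norm Gradient (KNG) mechanism in
normed-space form. -/
theorem kng_mechanism_pure_DP
    {Z : Type*} [MeasurableSpace Z] (ν : Measure Z)
    {H : Type*} [NormedAddCommGroup H] [MeasurableSpace H] [BorelSpace H]
    (σ Δ : ℝ) (hσ : 0 < σ) (hΔ : 0 ≤ Δ)
    (G₁ G₂ : Z → H) (hm₁ : Measurable G₁) (hm₂ : Measurable G₂)
    (hdiff : ∀ z, ‖G₁ z - G₂ z‖ ≤ Δ)
    (hint₁ : Integrable (fun z => Real.exp (-‖G₁ z‖ / σ)) ν)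
    (hint₂ : Integrable (fun z => Real.exp (-‖G₂ z‖ / σ)) ν)
    (hpos₁ : 0 < ∫ z, Real.exp (-‖G₁ z‖ / σ) ∂ν)
    (hpos₂ : 0 < ∫ z, Real.exp (-‖G₂ z‖ / σ) ∂ν)
    (A : Set Z) (hA : MeasurableSet A) :
    (∫ z in A, Real.exp (-‖G₁ z‖ / σ) ∂ν) / (∫ z, Real.exp (-‖G₁ z‖ / σ) ∂ν)
      ≤ Real.exp (2 * Δ / σ) *
        ((∫ z in A, Real.exp (-‖G₂ z‖ / σ) ∂ν) / (∫ z, Real.exp (-‖G₂ z‖ / σ) ∂ν)) := by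
  set e := Real.exp (Δ / σ) with he
  have hepos : 0 < e := Real.exp_pos _
  have key : ∀ (F G : Z → H), (∀ z, ‖F z - G z‖ ≤ Δ) →
      ∀ z, Real.exp (-‖F z‖ / σ) ≤ e * Real.exp (-‖G z‖ / σ) := by
    intro F G hFG z
    rw [he, ← Real.exp_add]
    apply Real.exp_le_exp.mpr
    have hb : ‖G z - F z‖ ≤ Δ := by rw [norm_sub_rev]; exact hFG z
    have h := (norm_sub_norm_le (G z) (F z)).trans hb
    rw [← add_div]
    gcongr
    linarith
  have key12 := key G₁ G₂ hdiff
  have key21 := key G₂ G₁ (fun z => by rw [norm_sub_rev]; exact hdiff z)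
  have h1 : (∫ z in A, Real.exp (-‖G₁ z‖ / σ) ∂ν) ≤ e * ∫ z in A, Real.exp (-‖G₂ z‖ / σ) ∂ν := by
    rw [← integral_const_mul]
    exact setIntegral_mono_on hint₁.integrableOn (hint₂.integrableOn.const_mul e) hA
      (fun z _ => key12 z)
  have h2 : (∫ z, Real.exp (-‖G₂ z‖ / σ) ∂ν) ≤ e * ∫ z, Real.exp (-‖G₁ z‖ / σ) ∂ν := by
    rw [← integral_const_mul]
    exact integral_mono hint₂ (hint₁.const_mul e) key21
  have hA2 : 0 ≤ ∫ z in A, Real.exp (-‖G₂ z‖ / σ) ∂ν :=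
    integral_nonneg fun z => (Real.exp_pos _).le
  rw [show 2 * Δ / σ = Δ / σ + Δ / σ by ring, Real.exp_add, ← he,
    div_le_iff₀ hpos₁, mul_comm (e * e) _, mul_assoc, div_mul_eq_mul_div,
    le_div_iff₀ hpos₂]
  calc (∫ z in A, Real.exp (-‖G₁ z‖ / σ) ∂ν) * ∫ z, Real.exp (-‖G₂ z‖ / σ) ∂ν
      ≤ (e * ∫ z in A, Real.exp (-‖G₂ z‖ / σ) ∂ν) * (e * ∫ z, Real.exp (-‖G₁ z‖ / σ) ∂ν) :=
        mul_le_mul h1 h2 (integral_nonneg fun z => (Real.exp_pos _).le)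
          (by positivity)
    _ = (∫ z in A, Real.exp (-‖G₂ z‖ / σ) ∂ν) * (e * e * ∫ z, Real.exp (-‖G₁ z‖ / σ) ∂ν) := by
        ring
end
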